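/- For integers ℓ ≥ 0 and 1 ≤ m ≤ d−ℓ, the inequality (d−ℓ)²·C(d,m) ≥ d·m·C(d−ℓ+1, m+1) holds. (This shows that the Type-II secure determinant code parameters satisfy the upper bound F_{s,II} ≤ (d−ℓ)²·α/d for k = d.) -/

import Mathlib

/-- For `m ≥ 1` and `e ≤ d`: `d * C(e,m) ≤ e * C(d,m)`. -/
lemma aux_choose_ratio (e d m : ℕ) (hm : 1 ≤ m) (hed : e ≤ d) :
    d * Nat.choose e m ≤ e * Nat.choose d m := by
  obtain ⟨k, rfl⟩ : ∃ k, m = k + 1 := ⟨m - 1, by omega⟩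
  rcases lt_or_ge e (k + 1) with h | h
  · rw [Nat.choose_eq_zero_of_lt h]; simp
  · obtain ⟨e', rfl⟩ : ∃ e', e = e' + 1 := ⟨e - 1, by omega⟩
    obtain ⟨d', rfl⟩ : ∃ d', d = d' + 1 := ⟨d - 1, by omega⟩
    have h1 := (Nat.add_one_mul_choose_eq e' k).symm
    have h2 := (Nat.add_one_mul_choose_eq d' k).symm
    have h3 : Nat.choose e' k ≤ Nat.choose d' k :=
      Nat.choose_le_choose k (by omega)
    have : (k + 1) * ((d' + 1) * Nat.choose (e' + 1) (k + 1)) ≤ (k + 1) * ((e' + 1) * Nat.choose (d' + 1) (k + 1)) :=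
      calc (k + 1) * ((d' + 1) * Nat.choose (e' + 1) (k + 1))
        = (d' + 1) * (Nat.choose (e' + 1) (k + 1) * (k + 1)) := by ring
      _ = (d' + 1) * ((e' + 1) * Nat.choose e' k) := by rw [← h1]
      _ ≤ (d' + 1) * ((e' + 1) * Nat.choose d' k) := by
          exact Nat.mul_le_mul_left _ (Nat.mul_le_mul_left _ h3)
      _ = (e' + 1) * (Nat.choose (d' + 1) (k + 1) * (k + 1)) := by
          rw [h2]; ring
      _ = (k + 1) * ((e' + 1) * Nat.choose (d' + 1) (k + 1)) := by ring
    exact Nat.le_of_mul_le_mul_left this (by omega)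

/-- For `ℓ ≥ 0` and `1 ≤ m ≤ d − ℓ`: `(d−ℓ)²·C(d,m) ≥ d·m·C(d−ℓ+1, m+1)`,
i.e. the Type-II secure determinant code parameters satisfy the upper bound
`F_{s,II} ≤ (d−ℓ)²·α/d`. -/
theorem typeII_upper_bound_satisfied (d m ℓ : ℕ) (hm : 1 ≤ m) (hmd : m ≤ d - ℓ) :
    (d - ℓ) ^ 2 * Nat.choose d m ≥ d * (m * Nat.choose (d - ℓ + 1) (m + 1)) := by
  set e := d - ℓ with he
  have hed : e ≤ d := Nat.sub_le d ℓ
  have h1 : Nat.choose (e + 1) (m + 1) * (m + 1) = (e + 1) * Nat.choose e m :=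
    (Nat.add_one_mul_choose_eq e m).symm
  have h2 : d * Nat.choose e m ≤ e * Nat.choose d m := aux_choose_ratio e d m hm hed
  have h3 : m * (e + 1) ≤ (m + 1) * e := by nlinarith
  show d * (m * Nat.choose (e + 1) (m + 1)) ≤ e ^ 2 * Nat.choose d m
  have key : (m + 1) * (d * (m * Nat.choose (e + 1) (m + 1))) ≤ (m + 1) * (e ^ 2 * Nat.choose d m) :=
    calc (m + 1) * (d * (m * Nat.choose (e + 1) (m + 1)))
      = d * m * (Nat.choose (e + 1) (m + 1) * (m + 1)) := by ring
    _ = d * m * ((e + 1) * Nat.choose e m) := by rw [h1]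
    _ = m * (e + 1) * (d * Nat.choose e m) := by ring
    _ ≤ (m + 1) * e * (e * Nat.choose d m) :=
        Nat.mul_le_mul h3 h2
    _ = (m + 1) * (e ^ 2 * Nat.choose d m) := by ring
  exact Nat.le_of_mul_le_mul_left key (by omega)
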